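/- Let f : H → ℝ be f(x) = ½‖x‖² on a real Hilbert space H, γ > 0, and (x,η) ∈ H × ℝ with η + ‖x‖²/(2γ) ≤ 0. Then prox_{γ𝑓̃}(x,η) = (0,0). -/

import Mathlib

open scoped RealInnerProductSpace
open Filter Topology

/-- Fenchel conjugate of `f` on a real inner product space. -/
noncomputable def fenchel {H : Type*} [NormedAddCommGroup H] [InnerProductSpace ℝ H]
    (f : H → EReal) (u : H) : EReal :=
  ⨆ x : H, ((⟪x, u⟫ : ℝ) : EReal) - f x

/-- Epigraph of an `EReal`-valued function. -/
def epi {E : Type*} (f : E → EReal) : Set (E × ℝ) := {p | f p.1 ≤ (p.2 : EReal)}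

/-- `f` is proper, lower semicontinuous and convex. -/
def ProperLscConvex {E : Type*} [AddCommGroup E] [Module ℝ E] [TopologicalSpace E]
    (f : E → EReal) : Prop :=
  (∀ x, f x ≠ ⊥) ∧ (∃ x, f x ≠ ⊤) ∧ LowerSemicontinuous f ∧ Convex ℝ (epi f)

/-- Effective domain. -/
def edom {E : Type*} (f : E → EReal) : Set E := {x | f x ≠ ⊤}

/-- Recession function of a proper lsc convex function:
`rec f x = sup_{y ∈ dom f} (f (y + x) - f y)`. -/
noncomputable def recFn {E : Type*} [AddCommGroup E] (f : E → EReal) (x : E) : EReal :=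
  ⨆ (y : E) (_ : f y ≠ ⊤), f (y + x) - f y

/-- Perspective of `f`. -/
noncomputable def persp {E : Type*} [AddCommGroup E] [Module ℝ E] (f : E → EReal) :
    E × ℝ → EReal := fun p =>
  if 0 < p.2 then (p.2 : EReal) * f (p.2⁻¹ • p.1)
  else if p.2 = 0 then recFn f p.1
  else ⊤

/-- `p` is the proximal point `prox_{γ f} x`, i.e. the minimizer of
`γ f(y) + ½‖x - y‖²`. -/
def IsProx {H : Type*} [NormedAddCommGroup H] (f : H → EReal) (γ : ℝ) (x p : H) : Prop :=
  ∀ y : H, (γ : EReal) * f p + ((‖x - p‖ ^ 2 / 2 : ℝ) : EReal)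
    ≤ (γ : EReal) * f y + ((‖x - y‖ ^ 2 / 2 : ℝ) : EReal)

/-- `p` is the metric projection of `x` onto `C`. -/
def IsProj {H : Type*} [NormedAddCommGroup H] (C : Set H) (x p : H) : Prop :=
  p ∈ C ∧ ∀ y ∈ C, ‖x - p‖ ≤ ‖x - y‖

/-- Proximity operator on `H ⊕ ℝ` (with the Hilbert direct-sum norm
`‖(x,η)‖² = ‖x‖² + η²`). -/
def IsProx2 {H : Type*} [NormedAddCommGroup H] (F : H × ℝ → EReal) (γ : ℝ)
    (x : H) (η : ℝ) (p : H) (μ : ℝ) : Prop :=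
  ∀ (y : H) (ν : ℝ),
    (γ : EReal) * F (p, μ) + (((‖x - p‖ ^ 2 + (η - μ) ^ 2) / 2 : ℝ) : EReal)
      ≤ (γ : EReal) * F (y, ν) + (((‖x - y‖ ^ 2 + (η - ν) ^ 2) / 2 : ℝ) : EReal)

/-- Fenchel conjugate on `H ⊕ ℝ` with `⟪(x,η),(u,χ)⟫ = ⟪x,u⟫ + ηχ`. -/
noncomputable def fenchel2 {H : Type*} [NormedAddCommGroup H] [InnerProductSpace ℝ H]
    (F : H × ℝ → EReal) (u : H) (χ : ℝ) : EReal :=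
  ⨆ p : H × ℝ, ((⟪p.1, u⟫ + p.2 * χ : ℝ) : EReal) - F p

/-- Support function of a set. -/
noncomputable def suppFn {H : Type*} [NormedAddCommGroup H] [InnerProductSpace ℝ H]
    (C : Set H) (u : H) : EReal :=
  ⨆ x ∈ C, ((⟪x, u⟫ : ℝ) : EReal)


lemma recFn_sq_zero {H : Type*} [NormedAddCommGroup H] [InnerProductSpace ℝ H] :
    recFn (fun y : H => ((‖y‖ ^ 2 / 2 : ℝ) : EReal)) 0 = 0 := by
  unfold recFn
  have : ∀ y : H, (⨆ (_ : ((‖y‖ ^ 2 / 2 : ℝ) : EReal) ≠ ⊤),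
      (((‖y + 0‖ ^ 2 / 2 : ℝ) : EReal) - ((‖y‖ ^ 2 / 2 : ℝ) : EReal))) = 0 := by
    intro y
    rw [iSup_pos (by simp : ((‖y‖ ^ 2 / 2 : ℝ) : EReal) ≠ ⊤), add_zero,
      ← EReal.coe_sub, sub_self, EReal.coe_zero]
  simp only [this, iSup_const]

lemma recFn_sq_top {H : Type*} [NormedAddCommGroup H] [InnerProductSpace ℝ H]
    {y : H} (hy : y ≠ 0) :
    recFn (fun z : H => ((‖z‖ ^ 2 / 2 : ℝ) : EReal)) y = ⊤ := by
  unfold recFn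
  rw [iSup_eq_top]
  intro b hb
  obtain ⟨c, hbc, -⟩ := EReal.lt_iff_exists_real_btwn.mp hb
  have hy2 : (0:ℝ) < ‖y‖ ^ 2 := by
    have := norm_pos_iff.mpr hy
    positivity
  set t : ℝ := c / ‖y‖ ^ 2 with ht
  refine ⟨t • y, ?_⟩
  simp only []
  rw [iSup_pos (by simp : ((‖t • y‖ ^ 2 / 2 : ℝ) : EReal) ≠ ⊤)]
  refine lt_of_lt_of_le hbc ?_
  have key : (((‖t • y + y‖ ^ 2 / 2 : ℝ) : EReal) - ((‖t • y‖ ^ 2 / 2 : ℝ) : EReal))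
      = ((c + ‖y‖ ^ 2 / 2 : ℝ) : EReal) := by
    rw [← EReal.coe_sub]
    congr 1
    have h1 : t • y + y = (t + 1) • y := by
      rw [add_smul, one_smul]
    rw [h1, norm_smul, norm_smul]
    have : |t + 1| ^ 2 * ‖y‖ ^ 2 / 2 - |t| ^ 2 * ‖y‖ ^ 2 / 2
        = (2 * t + 1) * ‖y‖ ^ 2 / 2 := by
      rw [sq_abs, sq_abs]; ring
    simp only [Real.norm_eq_abs, mul_pow]
    rw [this, ht]
    field_simp
  calc ((c : ℝ) : EReal) ≤ ((c + ‖y‖ ^ 2 / 2 : ℝ) : EReal) := by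
        exact_mod_cast by linarith
    _ = _ := key.symm


/-- for `f = ½‖·‖²`, if `η + ‖x‖²/(2γ) ≤ 0` then
`prox_{γ f̃}(x,η) = (0,0)`. -/
theorem prox_persp_sq_of_nonpos {H : Type*} [NormedAddCommGroup H]
    [InnerProductSpace ℝ H] (γ : ℝ) (hγ : 0 < γ) (x : H) (η : ℝ)
    (hle : η + ‖x‖ ^ 2 / (2 * γ) ≤ 0) :
    IsProx2 (persp fun y : H => ((‖y‖ ^ 2 / 2 : ℝ) : EReal)) γ x η 0 0 := by
  intro y ν
  have hlhs : (γ : EReal) * persp (fun y : H => ((‖y‖ ^ 2 / 2 : ℝ) : EReal)) ((0:H), (0:ℝ))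
      + (((‖x - 0‖ ^ 2 + (η - 0) ^ 2) / 2 : ℝ) : EReal)
      = (((‖x‖ ^ 2 + η ^ 2) / 2 : ℝ) : EReal) := by
    have : persp (fun y : H => ((‖y‖ ^ 2 / 2 : ℝ) : EReal)) ((0:H), (0:ℝ)) = 0 := by
      simp only [persp, lt_irrefl, if_false, if_pos rfl, if_neg (lt_irrefl (0:ℝ))]
      exact recFn_sq_zero
    rw [this, mul_zero, zero_add, sub_zero, sub_zero]
  rw [hlhs]
  rcases lt_trichotomy 0 ν with hν | hν | hν
  · -- ν > 0
    have hpersp : persp (fun y : H => ((‖y‖ ^ 2 / 2 : ℝ) : EReal)) (y, ν)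
        = ((‖y‖ ^ 2 / (2 * ν) : ℝ) : EReal) := by
      simp only [persp, if_pos hν]
      rw [← EReal.coe_mul]
      congr 1
      rw [norm_smul, Real.norm_eq_abs, mul_pow, sq_abs]
      field_simp
    rw [hpersp, ← EReal.coe_mul, ← EReal.coe_add]
    rw [EReal.coe_le_coe_iff]
    have h1 : ‖x‖ ^ 2 ≤ (-η) * (2 * γ) :=
      (div_le_iff₀ (by positivity)).mp (by linarith)
    have hsub : ‖x - y‖ ^ 2 = ‖x‖ ^ 2 - 2 * ⟪x, y⟫ + ‖y‖ ^ 2 := by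
      rw [@norm_sub_sq_real]
    have hinner : ⟪x, y⟫ ≤ ‖x‖ * ‖y‖ := real_inner_le_norm x y
    have h2 : γ * (‖y‖ ^ 2 / (2 * ν)) = γ * ‖y‖ ^ 2 / (2 * ν) := by ring
    rw [h2]
    rw [← sub_le_iff_le_add, ← sub_div, le_div_iff₀ (by positivity : (0:ℝ) < 2 * ν)]
    nlinarith [sq_nonneg (γ * ‖y‖ - ν * ‖x‖), sq_nonneg (‖y‖ - ν), mul_pos hγ hν,
      mul_nonneg (norm_nonneg x) (norm_nonneg y), sq_nonneg ν, sq_nonneg ‖y‖,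
      mul_le_mul_of_nonneg_left hinner (le_of_lt (mul_pos hγ hν)),
      mul_le_mul_of_nonneg_right h1 (le_of_lt (mul_pos hν hν))]
  · -- ν = 0
    subst hν
    rcases eq_or_ne y 0 with rfl | hy
    · have : persp (fun y : H => ((‖y‖ ^ 2 / 2 : ℝ) : EReal)) ((0:H), (0:ℝ)) = 0 := by
        simp only [persp, lt_irrefl, if_false, if_pos rfl, if_neg (lt_irrefl (0:ℝ))]
        exact recFn_sq_zero
      rw [this, mul_zero, zero_add, sub_zero, sub_zero]
    · have : persp (fun y : H => ((‖y‖ ^ 2 / 2 : ℝ) : EReal)) (y, (0:ℝ)) = ⊤ := by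
        simp only [persp, lt_irrefl, if_false, if_pos rfl, if_neg (lt_irrefl (0:ℝ))]
        exact recFn_sq_top hy
      rw [this]
      rw [EReal.mul_top_of_pos (by exact_mod_cast hγ), EReal.top_add_coe]
      exact le_top
  · -- ν < 0
    have : persp (fun y : H => ((‖y‖ ^ 2 / 2 : ℝ) : EReal)) (y, ν) = ⊤ := by
      simp only [persp]
      rw [if_neg (by simpa using not_lt.mpr hν.le), if_neg (ne_of_lt hν)]
    rw [this]
    rw [EReal.mul_top_of_pos (by exact_mod_cast hγ), EReal.top_add_coe]
    exact le_top
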